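/- Let P be an n×n Hermitian positive definite complex matrix and let Λ_a and Λ be n×n Hermitian positive semidefinite complex matrices. Then for every γ ≥ 0, tr((P + Λ_a + γΛ)⁻¹ Λ) ≤ tr((P + γΛ)⁻¹ Λ). -/

import Mathlib

open Matrix
open scoped ComplexOrder

/-- Scalar multiple of a PSD matrix by a nonneg real is PSD. -/
lemma posSemidef_real_smul {n : ℕ} {Λ : Matrix (Fin n) (Fin n) ℂ}
    (hΛ : Λ.PosSemidef) {γ : ℝ} (hγ : 0 ≤ γ) : ((γ : ℂ) • Λ).PosSemidef := by
  constructor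
  · unfold Matrix.IsHermitian
    rw [conjTranspose_smul, hΛ.isHermitian]
    congr 1
    simp [Complex.ext_iff]
  · have hγ' : (0 : ℂ) ≤ (γ : ℂ) := by
      rw [Complex.le_def]; simp [hγ]
    exact (hΛ.smul hγ').2

/-- Trace of the product of two PSD matrices is nonnegative. -/
lemma trace_mul_posSemidef_nonneg {n : ℕ} {M N : Matrix (Fin n) (Fin n) ℂ}
    (hM : M.PosSemidef) (hN : N.PosSemidef) : 0 ≤ (M * N).trace := by
  obtain ⟨C, hC⟩ : ∃ C : Matrix (Fin n) (Fin n) ℂ, M = Cᴴ * C := by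
    open scoped MatrixOrder Matrix.Norms.L2Operator in
    exact CStarAlgebra.nonneg_iff_eq_star_mul_self.mp hM.nonneg
  obtain ⟨D, hD⟩ : ∃ D : Matrix (Fin n) (Fin n) ℂ, N = Dᴴ * D := by
    open scoped MatrixOrder Matrix.Norms.L2Operator in
    exact CStarAlgebra.nonneg_iff_eq_star_mul_self.mp hN.nonneg
  have key : (M * N).trace = ((D * Cᴴ)ᴴ * (D * Cᴴ)).trace := by
    rw [hC, hD, conjTranspose_mul, conjTranspose_conjTranspose]
    rw [show Cᴴ * C * (Dᴴ * D) = Cᴴ * (C * Dᴴ * D) by noncomm_ring]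
    rw [Matrix.trace_mul_comm, show C * Dᴴ * D * Cᴴ = C * Dᴴ * (D * Cᴴ) by noncomm_ring]
  rw [key]
  set E := D * Cᴴ
  rw [Matrix.trace]
  apply Finset.sum_nonneg
  intro i _
  simp only [Matrix.diag_apply, Matrix.mul_apply, Matrix.conjTranspose_apply]
  exact Finset.sum_nonneg fun j _ => star_mul_self_nonneg (E j i)

/-- For `P` Hermitian positive definite and `Λa`, `Λ` Hermitian
positive semidefinite, and every `γ ≥ 0`,
`tr((P + Λa + γΛ)⁻¹ Λ) ≤ tr((P + γΛ)⁻¹ Λ)` (both traces are real; the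
inequality is stated in the standard partial order on `ℂ`). -/
theorem trace_inv_mul_le
    {n : ℕ} (P Λa Λ : Matrix (Fin n) (Fin n) ℂ)
    (hP : P.PosDef) (hΛa : Λa.PosSemidef) (hΛ : Λ.PosSemidef)
    (γ : ℝ) (hγ : 0 ≤ γ) :
    ((P + Λa + (γ : ℂ) • Λ)⁻¹ * Λ).trace ≤ ((P + (γ : ℂ) • Λ)⁻¹ * Λ).trace := by
  have hsm : ((γ : ℂ) • Λ).PosSemidef := posSemidef_real_smul hΛ hγ
  set B := P + (γ : ℂ) • Λ with hBdef
  set A := P + Λa + (γ : ℂ) • Λ with hAdef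
  have hAB : A = B + Λa := by rw [hAdef, hBdef]; abel
  have hB : B.PosDef := hP.add_posSemidef hsm
  have hA : A.PosDef := hAB ▸ hB.add_posSemidef hΛa
  have hAinv : A⁻¹ * A = 1 :=
    Matrix.nonsing_inv_mul A (Matrix.isUnit_iff_isUnit_det A |>.mp hA.isUnit)
  have hAinv' : A * A⁻¹ = 1 :=
    Matrix.mul_nonsing_inv A (Matrix.isUnit_iff_isUnit_det A |>.mp hA.isUnit)
  have hBinv' : B * B⁻¹ = 1 :=
    Matrix.mul_nonsing_inv B (Matrix.isUnit_iff_isUnit_det B |>.mp hB.isUnit)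
  have hBinv : B⁻¹ * B = 1 :=
    Matrix.nonsing_inv_mul B (Matrix.isUnit_iff_isUnit_det B |>.mp hB.isUnit)
  -- the middle matrix
  set M := Λa + Λa * B⁻¹ * Λa with hMdef
  have hMpsd : M.PosSemidef := by
    apply hΛa.add
    have := (hB.posSemidef.inv).conjTranspose_mul_mul_same Λa
    rwa [hΛa.isHermitian] at this
  -- key identity : B⁻¹ - A⁻¹ = (A⁻¹)ᴴ * M * A⁻¹
  have hkey : B⁻¹ - A⁻¹ = (A⁻¹)ᴴ * M * A⁻¹ := by
    have hAinvH : (A⁻¹)ᴴ = A⁻¹ := hA.inv.isHermitian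
    rw [hAinvH, hMdef]
    have h1 : A * B⁻¹ * A = A + M := by
      rw [hAB, hMdef, Matrix.add_mul, hBinv', Matrix.add_mul, Matrix.one_mul,
        Matrix.mul_add, Matrix.mul_assoc Λa B⁻¹ B, hBinv, Matrix.mul_one]
    calc B⁻¹ - A⁻¹ = A⁻¹ * (A * B⁻¹ * A) * A⁻¹ - A⁻¹ * A * A⁻¹ := by
          rw [hAinv, Matrix.one_mul]
          congr 1
          rw [show A⁻¹ * (A * B⁻¹ * A) * A⁻¹ = (A⁻¹ * A) * B⁻¹ * (A * A⁻¹) by noncomm_ring,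
            hAinv, hAinv', Matrix.one_mul, Matrix.mul_one]
      _ = A⁻¹ * (A + M) * A⁻¹ - A⁻¹ * A * A⁻¹ := by rw [h1]
      _ = A⁻¹ * M * A⁻¹ := by noncomm_ring
  have hdiff : (B⁻¹ - A⁻¹).PosSemidef := by
    rw [hkey]
    exact hMpsd.conjTranspose_mul_mul_same A⁻¹
  have htr : 0 ≤ ((B⁻¹ - A⁻¹) * Λ).trace := trace_mul_posSemidef_nonneg hdiff hΛ
  rw [Matrix.sub_mul, Matrix.trace_sub] at htr
  exact sub_nonneg.mp htr
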